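/- Let L : ℝⁿ × ℝᵐ → ℝ be three times continuously differentiable, let (x̄, p̄) satisfy ∇ₓL(x̄, p̄) = 0 with M := ∇²ₓₓL(x̄, p̄) positive definite, and let x* : U → ℝⁿ be the continuously differentiable solution map on a neighborhood U of p̄ with x*(p̄) = x̄ and ∇ₓL(x*(p), p) = 0 on U. Define the tangential predictor x̃(p) := x̄ − M⁻¹N(p − p̄), where N := ∇²ₓₚL(x̄, p̄). Then there exist L_x > 0 and a neighborhood V ⊆ U of p̄ such that ‖x̃(p) − x*(p)‖ ≤ L_x‖p − p̄‖² for all p ∈ V. -/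

import Mathlib

set_option maxHeartbeats 4000000


open RealInnerProductSpace

/-- The tangential predictor `x̃(p) = x̄ − M⁻¹N(p − p̄)` approximates the
parametric optimal solution with error quadratic in the parameter perturbation. Here
`M = ∇²ₓₓL(x̄,p̄)`, `N = ∇²ₓₚL(x̄,p̄)`, and `Minv` is the inverse of `M` (which exists
since `M` is positive definite). -/
theorem tangential_predictor_quadratic_error {n m : ℕ}
    (L : EuclideanSpace ℝ (Fin n) × EuclideanSpace ℝ (Fin m) → ℝ)
    (xbar : EuclideanSpace ℝ (Fin n)) (pbar : EuclideanSpace ℝ (Fin m))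
    (hL : ContDiff ℝ 3 L)
    (hgrad : gradient (fun x => L (x, pbar)) xbar = 0)
    (hhess : ∀ d : EuclideanSpace ℝ (Fin n), d ≠ 0 →
      0 < iteratedFDeriv ℝ 2 (fun x => L (x, pbar)) xbar ![d, d])
    (U : Set (EuclideanSpace ℝ (Fin m))) (hU : U ∈ nhds pbar)
    (xs : EuclideanSpace ℝ (Fin m) → EuclideanSpace ℝ (Fin n))
    (hxs : ContDiffOn ℝ 1 xs U) (hfix : xs pbar = xbar)
    (hstat : ∀ p ∈ U, gradient (fun x => L (x, p)) (xs p) = 0)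
    (Minv : EuclideanSpace ℝ (Fin n) →L[ℝ] EuclideanSpace ℝ (Fin n))
    (hMinv_left : ∀ v, Minv ((fderiv ℝ (gradient fun x => L (x, pbar)) xbar) v) = v)
    (hMinv_right : ∀ v, (fderiv ℝ (gradient fun x => L (x, pbar)) xbar) (Minv v) = v) :
    ∃ Lx > (0:ℝ), ∃ V ∈ nhds pbar, V ⊆ U ∧
      ∀ p ∈ V,
        ‖(xbar - Minv ((fderiv ℝ (fun p' => gradient (fun x => L (x, p')) xbar) pbar)
            (p - pbar))) - xs p‖ ≤ Lx * ‖p - pbar‖ ^ 2 := by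
  have hLd : Differentiable ℝ L := hL.differentiable (by norm_num)
  set G : (EuclideanSpace ℝ (Fin n) × EuclideanSpace ℝ (Fin m)) → EuclideanSpace ℝ (Fin n) :=
    fun z => (InnerProductSpace.toDual ℝ (EuclideanSpace ℝ (Fin n))).symm
      ((fderiv ℝ L z).comp (ContinuousLinearMap.inl ℝ _ _)) with hGdef
  have key : ∀ (x : EuclideanSpace ℝ (Fin n)) (p : EuclideanSpace ℝ (Fin m)),
      gradient (fun x => L (x, p)) x = G (x, p) := by
    intro x p
    have h1 : HasFDerivAt (fun y : EuclideanSpace ℝ (Fin n) => (y, p))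
        (ContinuousLinearMap.inl ℝ _ _) x := hasFDerivAt_prodMk_left x p
    have h3 : HasFDerivAt (fun y => L (y, p))
        ((fderiv ℝ L (x, p)).comp (ContinuousLinearMap.inl ℝ _ _)) x :=
      (hLd (x, p)).hasFDerivAt.comp x h1
    rw [gradient, h3.fderiv]
  have hG : ContDiff ℝ 2 G := by
    have h1 : ContDiff ℝ 2 (fderiv ℝ L) := hL.fderiv_right (by norm_num)
    have h2 : ContDiff ℝ 2 (fun z => (fderiv ℝ L z).comp
        (ContinuousLinearMap.inl ℝ (EuclideanSpace ℝ (Fin n)) (EuclideanSpace ℝ (Fin m)))) :=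
      h1.clm_comp contDiff_const
    exact (LinearIsometryEquiv.contDiff _).comp h2
  have hGdiff : Differentiable ℝ G := hG.differentiable (by norm_num)
  set z₀ : EuclideanSpace ℝ (Fin n) × EuclideanSpace ℝ (Fin m) := (xbar, pbar) with hz₀
  set D := fderiv ℝ G z₀ with hDdef
  have hM : fderiv ℝ (gradient fun x => L (x, pbar)) xbar
      = D.comp (ContinuousLinearMap.inl ℝ _ _) := by
    have hfun : (gradient fun x => L (x, pbar)) = fun x => G (x, pbar) :=
      funext fun x => key x pbar
    rw [hfun]
    have h1 : HasFDerivAt (fun y : EuclideanSpace ℝ (Fin n) => (y, pbar))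
        (ContinuousLinearMap.inl ℝ _ _) xbar := hasFDerivAt_prodMk_left xbar pbar
    exact ((hGdiff z₀).hasFDerivAt.comp xbar h1).fderiv
  have hN : fderiv ℝ (fun p' => gradient (fun x => L (x, p')) xbar) pbar
      = D.comp (ContinuousLinearMap.inr ℝ _ _) := by
    have hfun : (fun p' => gradient (fun x => L (x, p')) xbar) = fun p' => G (xbar, p') :=
      funext fun p => key xbar p
    rw [hfun]
    have h1 : HasFDerivAt (fun q : EuclideanSpace ℝ (Fin m) => (xbar, q))
        (ContinuousLinearMap.inr ℝ _ _) pbar := hasFDerivAt_prodMk_right xbar pbar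
    exact ((hGdiff z₀).hasFDerivAt.comp pbar h1).fderiv
  -- Lipschitz constant for fderiv G near z₀
  have hG' : ContDiff ℝ 1 (fderiv ℝ G) := hG.fderiv_right (by norm_num)
  obtain ⟨K₁, t₁, ht₁, hlip₁⟩ := (hG'.contDiffAt (x := z₀)).exists_lipschitzOnWith
  obtain ⟨K₂, t₂, ht₂, hlip₂⟩ := (hxs.contDiffAt hU).exists_lipschitzOnWith
  obtain ⟨r, hr, hball₁⟩ := Metric.mem_nhds_iff.mp ht₁
  obtain ⟨ε₀, hε₀, hball₂⟩ := Metric.mem_nhds_iff.mp (Filter.inter_mem hU ht₂)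
  have hK₂1 : (0:ℝ) < (K₂:ℝ) + 1 := by positivity
  set ε : ℝ := min ε₀ (r / (2 * ((K₂:ℝ) + 1))) with hεdef
  have hε : 0 < ε := lt_min hε₀ (by positivity)
  refine ⟨(‖Minv‖ + 1) * ((K₁:ℝ) + 1) * ((K₂:ℝ) + 1) ^ 2, by positivity,
    Metric.ball pbar ε, Metric.ball_mem_nhds _ hε,
    fun q hq => ((Metric.ball_subset_ball (min_le_left _ _)).trans hball₂ hq).1, ?_⟩
  intro p hp
  have hpU : p ∈ U := ((Metric.ball_subset_ball (min_le_left _ _)).trans hball₂ hp).1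
  have hpt₂ : p ∈ t₂ := ((Metric.ball_subset_ball (min_le_left _ _)).trans hball₂ hp).2
  have hpbart₂ : pbar ∈ t₂ := mem_of_mem_nhds ht₂
  set w : EuclideanSpace ℝ (Fin m) := p - pbar with hwdef
  set dx : EuclideanSpace ℝ (Fin n) := xs p - xbar with hdxdef
  have hwlt : ‖w‖ < ε := by
    rw [hwdef, ← dist_eq_norm]; exact hp
  have hdx : ‖dx‖ ≤ (K₂:ℝ) * ‖w‖ := by
    have := hlip₂.dist_le_mul p hpt₂ pbar hpbart₂
    rw [dist_eq_norm, dist_eq_norm, hfix] at this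
    exact this
  set z : EuclideanSpace ℝ (Fin n) × EuclideanSpace ℝ (Fin m) := (xs p, p) with hz
  have hzsub : z - z₀ = (dx, w) := by rw [hz, hz₀, Prod.mk_sub_mk]
  set δ : ℝ := ‖z - z₀‖ with hδdef
  have hδ0 : 0 ≤ δ := norm_nonneg _
  have hδle : δ ≤ ((K₂:ℝ) + 1) * ‖w‖ := by
    rw [hδdef, hzsub, Prod.norm_def]
    have h1 : ‖dx‖ ≤ ((K₂:ℝ) + 1) * ‖w‖ := by linarith [norm_nonneg w]
    have h2 : ‖w‖ ≤ ((K₂:ℝ) + 1) * ‖w‖ := by linarith [mul_nonneg K₂.coe_nonneg (norm_nonneg w)]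
    exact max_le h1 h2
  have hδr : δ < r := by
    have h1 : ((K₂:ℝ) + 1) * ‖w‖ < ((K₂:ℝ) + 1) * ε := by
      exact mul_lt_mul_of_pos_left hwlt hK₂1
    have h2 : ((K₂:ℝ) + 1) * ε ≤ ((K₂:ℝ) + 1) * (r / (2 * ((K₂:ℝ) + 1))) :=
      mul_le_mul_of_nonneg_left (min_le_right _ _) (le_of_lt hK₂1)
    have h3 : ((K₂:ℝ) + 1) * (r / (2 * ((K₂:ℝ) + 1))) = r / 2 := by
      field_simp
    linarith
  have hsub : Metric.closedBall z₀ δ ⊆ t₁ := fun y hy => by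
    apply hball₁
    rw [Metric.mem_closedBall] at hy
    rw [Metric.mem_ball]
    exact lt_of_le_of_lt hy hδr
  have hz₀mem : z₀ ∈ Metric.closedBall z₀ δ := Metric.mem_closedBall_self hδ0
  have hzmem : z ∈ Metric.closedBall z₀ δ := by
    rw [Metric.mem_closedBall, dist_eq_norm]
  have hbound : ∀ y ∈ Metric.closedBall z₀ δ, ‖fderiv ℝ G y - D‖ ≤ (K₁:ℝ) * δ := by
    intro y hy
    have h1 := hlip₁.dist_le_mul y (hsub hy) z₀ (hsub hz₀mem)
    rw [dist_eq_norm, dist_eq_norm] at h1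
    calc ‖fderiv ℝ G y - D‖ ≤ (K₁:ℝ) * ‖y - z₀‖ := h1
      _ ≤ (K₁:ℝ) * δ := by
          have := Metric.mem_closedBall.mp hy
          rw [dist_eq_norm] at this
          exact mul_le_mul_of_nonneg_left this (K₁.coe_nonneg)
  have htaylor := (convex_closedBall z₀ δ).norm_image_sub_le_of_norm_fderiv_le'
    (fun y _ => hGdiff y) hbound hz₀mem hzmem
  have hGz : G z = 0 := by rw [← key (xs p) p]; exact hstat p hpU
  have hGz₀ : G z₀ = 0 := by rw [← key xbar pbar]; exact hgrad
  rw [hGz, hGz₀, sub_zero, zero_sub, norm_neg] at htaylor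
  -- htaylor : ‖D (z - z₀)‖ ≤ K₁ * δ * ‖z - z₀‖
  have hDz : ‖D (z - z₀)‖ ≤ (K₁:ℝ) * δ * δ := by
    calc ‖D (z - z₀)‖ ≤ (K₁:ℝ) * δ * ‖z - z₀‖ := htaylor
      _ = (K₁:ℝ) * δ * δ := by rw [← hδdef]
  -- express target as -Minv (D (z - z₀))
  have hsplit : D (z - z₀) = D (ContinuousLinearMap.inl ℝ _ _ dx)
      + D (ContinuousLinearMap.inr ℝ _ _ w) := by
    rw [← map_add]
    congr 1
    rw [hzsub]
    simp [Prod.ext_iff]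
  have htarget : (xbar - Minv ((fderiv ℝ (fun p' => gradient (fun x => L (x, p')) xbar) pbar)
      (p - pbar))) - xs p = -(Minv (D (z - z₀))) := by
    have hdx_eq : dx = Minv (D (ContinuousLinearMap.inl ℝ _ _ dx)) := by
      have := hMinv_left dx
      rw [hM] at this
      exact this.symm
    rw [hsplit, map_add, hN]
    rw [ContinuousLinearMap.comp_apply, ← hwdef]
    rw [neg_add, ← hdx_eq, hdxdef]
    abel
  rw [htarget, norm_neg]
  calc ‖Minv (D (z - z₀))‖ ≤ ‖Minv‖ * ‖D (z - z₀)‖ := Minv.le_opNorm _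
    _ ≤ ‖Minv‖ * ((K₁:ℝ) * δ * δ) :=
        mul_le_mul_of_nonneg_left hDz (norm_nonneg _)
    _ ≤ (‖Minv‖ + 1) * ((K₁:ℝ) + 1) * ((K₂:ℝ) + 1) ^ 2 * ‖p - pbar‖ ^ 2 := by
        rw [← hwdef]
        have hK₁0 : (0:ℝ) ≤ (K₁:ℝ) := K₁.coe_nonneg
        have hMn : (0:ℝ) ≤ ‖Minv‖ := norm_nonneg _
        have hw0 : (0:ℝ) ≤ ‖w‖ := norm_nonneg _
        have hδ2 : δ * δ ≤ ((K₂:ℝ) + 1) ^ 2 * ‖w‖ ^ 2 := by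
          calc δ * δ ≤ (((K₂:ℝ) + 1) * ‖w‖) * (((K₂:ℝ) + 1) * ‖w‖) :=
                mul_le_mul hδle hδle hδ0 (by positivity)
            _ = ((K₂:ℝ) + 1) ^ 2 * ‖w‖ ^ 2 := by ring
        have h3 : (K₁:ℝ) * (δ * δ) ≤ ((K₁:ℝ) + 1) * (((K₂:ℝ) + 1) ^ 2 * ‖w‖ ^ 2) :=
          mul_le_mul (by linarith) hδ2 (mul_nonneg hδ0 hδ0) (by linarith)
        have h4 : ‖Minv‖ * ((K₁:ℝ) * (δ * δ))
            ≤ (‖Minv‖ + 1) * (((K₁:ℝ) + 1) * (((K₂:ℝ) + 1) ^ 2 * ‖w‖ ^ 2)) :=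
          mul_le_mul (by linarith) h3 (mul_nonneg hK₁0 (mul_nonneg hδ0 hδ0)) (by linarith)
        linarith [h4]
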